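/- Let Δ₁, Δ₂ be real numbers (or integers) with Δ₂ ≥ 2 and Δ₁ ≥ 2Δ₂ + 3, and let L₄ be the symmetric 4×4 matrix with rows (Δ₁, -1, -1, -1), (-1, Δ₂, -1, -1), (-1, -1, Δ₂-1, -1), (-1, -1, -1, Δ₂-1). Then the second largest eigenvalue of L₄ is strictly greater than Δ₂ + 1/2. -/

import Mathlib

open Finset

/-- The `k`-th largest element (1-indexed) of a multiset of reals, with default `0`. -/
noncomputable def kthLargestR (s : Multiset ℝ) (k : ℕ) : ℝ :=
  (s.sort (· ≤ ·)).reverse.getD (k - 1) 0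

/-- The second largest eigenvalue (i.e. second largest root, with multiplicity, of the
characteristic polynomial) of a square real matrix. -/
noncomputable def secondLargestEig {k : ℕ} (M : Matrix (Fin k) (Fin k) ℝ) : ℝ :=
  kthLargestR M.charpoly.roots 2

open Polynomial Matrix in
lemma stmt15_sorted_aux {l : List ℝ} (hs : l.Pairwise (fun a b => b ≤ a)) {c : ℝ}
    (h : 2 ≤ l.countP (fun x => decide (c < x))) : c < l.getD 1 0 := by
  match l, hs with
  | [], _ => rw [List.countP_nil] at h; omega
  | [a], _ =>
    rw [List.countP_cons, List.countP_nil] at h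
    split_ifs at h <;> omega
  | a :: b :: t, hs =>
    show c < b
    by_contra hb
    push_neg at hb
    have h0 : t.countP (fun x => decide (c < x)) = 0 := by
      rw [List.countP_eq_zero]
      intro x hx
      have hxb : x ≤ b := List.rel_of_pairwise_cons hs.of_cons hx
      simpa using (hxb.trans hb).not_gt
    rw [List.countP_cons, List.countP_cons, h0] at h
    simp only [hb.not_gt, decide_eq_true_eq, if_false] at h
    split_ifs at h <;> omega

lemma stmt15_kth_aux (s : Multiset ℝ) (c : ℝ)
    (h : 2 ≤ Multiset.card (s.filter (fun x => c < x))) : c < kthLargestR s 2 := by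
  unfold kthLargestR
  have hrev : ((s.sort (· ≤ ·)).reverse).Pairwise (fun a b => b ≤ a) := by
    rw [List.pairwise_reverse]
    exact s.pairwise_sort _
  apply stmt15_sorted_aux hrev
  have hcount : ((s.sort (· ≤ ·)).reverse).countP (fun x => decide (c < x))
      = Multiset.card (s.filter (fun x => c < x)) := by
    rw [← Multiset.coe_countP, Multiset.coe_reverse, Multiset.sort_eq,
      Multiset.countP_eq_card_filter]
  omega

/-- For reals `Δ₂ ≥ 2` and `Δ₁ ≥ 2Δ₂ + 3`, the second largest eigenvalue
of the matrix `L₄` is strictly greater than `Δ₂ + 1/2`. -/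
theorem stmt15 (Δ₁ Δ₂ : ℝ) (h₂ : 2 ≤ Δ₂) (h₁ : 2 * Δ₂ + 3 ≤ Δ₁) :
    secondLargestEig !![Δ₁, -1, -1, -1;
                        -1, Δ₂, -1, -1;
                        -1, -1, Δ₂ - 1, -1;
                        -1, -1, -1, Δ₂ - 1] > Δ₂ + 1 / 2 := by
  classical
  open Polynomial Matrix in
  set M : Matrix (Fin 4) (Fin 4) ℝ := !![Δ₁, -1, -1, -1;
                        -1, Δ₂, -1, -1;
                        -1, -1, Δ₂ - 1, -1;
                        -1, -1, -1, Δ₂ - 1] with hM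
  open Polynomial Matrix in
  have hev : ∀ x : ℝ, (Matrix.charpoly M).eval x =
      x^4 + (-Δ₁ - 3*Δ₂ + 2)*x^3 + (3*Δ₁*Δ₂ - 2*Δ₁ + 3*Δ₂^2 - 4*Δ₂ - 5)*x^2
        + (-3*Δ₁*Δ₂^2 + 4*Δ₁*Δ₂ + 2*Δ₁ - Δ₂^3 + 2*Δ₂^2 + 8*Δ₂ + 2)*x
        + (Δ₁*Δ₂^3 - 2*Δ₁*Δ₂^2 - 2*Δ₁*Δ₂ - 3*Δ₂^2 - 2*Δ₂) := by
    intro x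
    have h : (Matrix.charpoly M).eval x = ((charmatrix M).map (eval x)).det := by
      rw [Matrix.charpoly, ← coe_evalRingHom, RingHom.map_det]
      rfl
    rw [h]
    have h2 : (charmatrix M).map (eval x) =
        !![x - Δ₁, 1, 1, 1; 1, x - Δ₂, 1, 1; 1, 1, x - (Δ₂-1), 1; 1, 1, 1, x - (Δ₂-1)] := by
      ext i j
      fin_cases i <;> fin_cases j <;>
        simp [hM, charmatrix_apply, Matrix.diagonal_apply, Matrix.one_apply,
          Matrix.cons_val_zero, Matrix.cons_val_one, Matrix.head_cons, Matrix.vecHead,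
          Matrix.vecTail, Matrix.cons_val']
    rw [h2]
    rw [Matrix.det_succ_row_zero]
    simp [Fin.sum_univ_succ, Matrix.det_fin_three, Matrix.submatrix, Fin.succAbove_zero]
    simp [Fin.succAbove, Fin.lt_def]
    ring
  set p := Matrix.charpoly M with hp
  set c : ℝ := Δ₂ + 1 / 2 with hc
  -- sign facts
  have ht : (5 : ℝ) ≤ Δ₁ - Δ₂ := by linarith
  have hvc : p.eval c = 3/8*(Δ₁-Δ₂) + 1/16 := by rw [hev]; rw [hc]; ring
  have hva : p.eval Δ₁ = -3*(Δ₁-Δ₂)^2 + 2*(Δ₁-Δ₂) := by rw [hev]; ring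
  have hvb : p.eval (Δ₁+3) = 3*(Δ₁-Δ₂)^3 + 30*(Δ₁-Δ₂)^2 + 95*(Δ₁-Δ₂) + 96 := by
    rw [hev]; ring
  have hc' : 0 < p.eval c := by rw [hvc]; nlinarith
  have ha' : p.eval Δ₁ < 0 := by rw [hva]; nlinarith
  have hb' : 0 < p.eval (Δ₁+3) := by rw [hvb]; nlinarith
  -- two roots via IVT
  have hcont : ∀ a b : ℝ, ContinuousOn (fun x => p.eval x) (Set.Icc a b) :=
    fun a b => (Polynomial.continuous p).continuousOn
  have hcΔ : c ≤ Δ₁ := by rw [hc]; linarith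
  have hr₁ : ∃ r₁ ∈ Set.Ioo c Δ₁, p.eval r₁ = 0 := by
    have := intermediate_value_Ioo' hcΔ (hcont c Δ₁)
    have h0 : (0:ℝ) ∈ Set.Ioo (p.eval Δ₁) (p.eval c) := ⟨ha', hc'⟩
    obtain ⟨r, hr, hr0⟩ := this h0
    exact ⟨r, hr, hr0⟩
  have hr₂ : ∃ r₂ ∈ Set.Ioo Δ₁ (Δ₁+3), p.eval r₂ = 0 := by
    have := intermediate_value_Ioo (by linarith : Δ₁ ≤ Δ₁ + 3) (hcont Δ₁ (Δ₁+3))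
    have h0 : (0:ℝ) ∈ Set.Ioo (p.eval Δ₁) (p.eval (Δ₁+3)) := ⟨ha', hb'⟩
    obtain ⟨r, hr, hr0⟩ := this h0
    exact ⟨r, hr, hr0⟩
  obtain ⟨r₁, ⟨hr₁l, hr₁u⟩, hr₁0⟩ := hr₁
  obtain ⟨r₂, ⟨hr₂l, hr₂u⟩, hr₂0⟩ := hr₂
  have hp0 : p ≠ 0 := (Matrix.charpoly_monic M).ne_zero
  have hroot₁ : r₁ ∈ p.roots := (Polynomial.mem_roots hp0).2 hr₁0
  have hroot₂ : r₂ ∈ p.roots := (Polynomial.mem_roots hp0).2 hr₂0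
  set F := p.roots.filter (fun x => c < x) with hF
  have hF₁ : r₁ ∈ F := Multiset.mem_filter.2 ⟨hroot₁, hr₁l⟩
  have hF₂ : r₂ ∈ F := Multiset.mem_filter.2 ⟨hroot₂, lt_of_le_of_lt hcΔ hr₂l⟩
  have hne : r₁ ≠ r₂ := ne_of_lt (hr₁u.trans hr₂l)
  have hcard : 2 ≤ Multiset.card F := by
    have hF₁e : r₁ ∈ F.erase r₂ := (Multiset.mem_erase_of_ne hne).2 hF₁
    have h1 : 0 < Multiset.card (F.erase r₂) :=
      Multiset.card_pos_iff_exists_mem.mpr ⟨r₁, hF₁e⟩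
    have h2 := Multiset.cons_erase hF₂
    have := congrArg Multiset.card h2
    rw [Multiset.card_cons] at this
    omega
  have := stmt15_kth_aux p.roots c hcard
  exact this
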